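/- If a type τ has locally unique bound variables with respect to the environment Γ extended with (α:κ), and the descriptor δ is well-kinded with kind κ in Γ, then the capture-avoiding substitution {α ↦ δ}τ is α-equivalent to the capturing substitution [α ↦ δ]τ. -/

import Mathlib

/-- Kinds: the kind of effects and the kind of types. -/
inductive Kind : Type
| effect
| type

/-- Effects. -/
inductive Eff : Type
| tvar (a : ℕ)
| uvar (x : ℕ)
| pure
| join (e₁ e₂ : Eff)

/-- Types (with a base type Int). -/
inductive Ty : Type
| tvar (a : ℕ)
| uvar (x : ℕ)
| int
| arrow (t₁ : Ty) (e : Eff) (t₂ : Ty)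
| all (a : ℕ) (k : Kind) (t : Ty)

/-- Descriptors: types or effects. -/
inductive Desc : Type
| ty (t : Ty)
| eff (e : Eff)

/-- Expressions. -/
inductive Expr : Type
| var (x : ℕ)
| lit (n : ℤ)
| lam (x : ℕ) (t : Ty) (e : Expr)
| lamU (x : ℕ) (e : Expr)
| app (e₁ e₂ : Expr)
| lamD (a : ℕ) (k : Kind) (e : Expr)
| appD (e : Expr) (d : Desc)
| elet (x : ℕ) (e₁ e₂ : Expr)

/-- Environment entries: kind assignments and term-variable type assignments. -/
inductive Entry : Type
| kind (a : ℕ) (k : Kind)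
| var (x : ℕ) (t : Ty)

abbrev Env := List Entry

def lookupVar : Env → ℕ → Option Ty
| [], _ => none
| Entry.var y t :: Γ, x => if x = y then some t else lookupVar Γ x
| Entry.kind _ _ :: Γ, x => lookupVar Γ x

def lookupKind : Env → ℕ → Option Kind
| [], _ => none
| Entry.kind b k :: Γ, a => if a = b then some k else lookupKind Γ a
| Entry.var _ _ :: Γ, a => lookupKind Γ a

/-- Domain of kind assignments of an environment. -/
def Env.kdom : Env → Finset ℕ
| [] => ∅
| Entry.kind a _ :: Γ => insert a (Env.kdom Γ)
| Entry.var _ _ :: Γ => Env.kdom Γ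

/-- Free type variables of an effect. -/
def Eff.fv : Eff → Finset ℕ
| .tvar a => {a}
| .uvar _ => ∅
| .pure => ∅
| .join e₁ e₂ => e₁.fv ∪ e₂.fv

/-- Free unification variables of an effect. -/
def Eff.fuv : Eff → Finset ℕ
| .tvar _ => ∅
| .uvar x => {x}
| .pure => ∅
| .join e₁ e₂ => e₁.fuv ∪ e₂.fuv

/-- Free type variables of a type. -/
def Ty.fv : Ty → Finset ℕ
| .tvar a => {a}
| .uvar _ => ∅
| .int => ∅
| .arrow t₁ e t₂ => t₁.fv ∪ e.fv ∪ t₂.fv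
| .all a _ t => t.fv.erase a

/-- Free unification variables of a type (including those in effect annotations). -/
def Ty.fuv : Ty → Finset ℕ
| .tvar _ => ∅
| .uvar x => {x}
| .int => ∅
| .arrow t₁ e t₂ => t₁.fuv ∪ e.fuv ∪ t₂.fuv
| .all _ _ t => t.fuv

/-- Bound type variables of a type, as a list of binder occurrences. -/
def Ty.bv : Ty → List ℕ
| .tvar _ => []
| .uvar _ => []
| .int => []
| .arrow t₁ _ t₂ => t₁.bv ++ t₂.bv
| .all a _ t => a :: t.bv

def Desc.fv : Desc → Finset ℕ
| .ty t => t.fv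
| .eff e => e.fv

def Desc.fuv : Desc → Finset ℕ
| .ty t => t.fuv
| .eff e => e.fuv

def Desc.bv : Desc → List ℕ
| .ty t => t.bv
| .eff _ => []

/-- Bound type variables (binder occurrences) of an expression, including binders
occurring in type annotations and descriptors. -/
def Expr.bv : Expr → List ℕ
| .var _ => []
| .lit _ => []
| .lam _ t e => t.bv ++ e.bv
| .lamU _ e => e.bv
| .app e₁ e₂ => e₁.bv ++ e₂.bv
| .lamD a _ e => a :: e.bv
| .appD e d => e.bv ++ d.bv
| .elet _ e₁ e₂ => e₁.bv ++ e₂.bv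

/-- Bound type variables occurring in the types assigned by an environment. -/
def Env.bv : Env → List ℕ
| [] => []
| Entry.kind _ _ :: Γ => Env.bv Γ
| Entry.var _ t :: Γ => t.bv ++ Env.bv Γ

/-- Free unification variables of an environment. -/
def Env.fuv : Env → Finset ℕ
| [] => ∅
| Entry.kind _ _ :: Γ => Env.fuv Γ
| Entry.var _ t :: Γ => t.fuv ∪ Env.fuv Γ

/-- Capturing substitution of a descriptor for a type variable, in effects. -/
def Eff.substC (a : ℕ) (d : Desc) : Eff → Eff
| .tvar b => if b = a then (match d with | .eff e => e | .ty _ => .tvar b) else .tvar b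
| .uvar x => .uvar x
| .pure => .pure
| .join e₁ e₂ => .join (e₁.substC a d) (e₂.substC a d)

/-- Capturing substitution of a descriptor for a type variable, in types:
free occurrences of the variable are replaced literally, no binder is renamed. -/
def Ty.substC (a : ℕ) (d : Desc) : Ty → Ty
| .tvar b => if b = a then (match d with | .ty t => t | .eff _ => .tvar b) else .tvar b
| .uvar x => .uvar x
| .int => .int
| .arrow t₁ e t₂ => .arrow (t₁.substC a d) (e.substC a d) (t₂.substC a d)
| .all b k t => if b = a then .all b k t else .all b k (t.substC a d)

/-- Capturing renaming of a type variable in effects. -/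
def Eff.ren (a b : ℕ) : Eff → Eff := Eff.substC a (.eff (.tvar b))

/-- Capturing renaming of a type variable in types. -/
def Ty.ren (a b : ℕ) : Ty → Ty
| .tvar c => if c = a then .tvar b else .tvar c
| .uvar x => .uvar x
| .int => .int
| .arrow t₁ e t₂ => .arrow (t₁.ren a b) (e.ren a b) (t₂.ren a b)
| .all c k t => if c = a then .all c k t else .all c k (t.ren a b)

/-- Capturing substitution of a descriptor for a unification variable, in effects. -/
def Eff.substU (x : ℕ) (d : Desc) : Eff → Eff
| .tvar a => .tvar a
| .uvar y => if y = x then (match d with | .eff e => e | .ty _ => .uvar y) else .uvar y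
| .pure => .pure
| .join e₁ e₂ => .join (e₁.substU x d) (e₂.substU x d)

/-- Capturing substitution of a descriptor for a unification variable, in types:
no binder is renamed, so bound variables may capture free variables of the
substituted descriptor. -/
def Ty.substU (x : ℕ) (d : Desc) : Ty → Ty
| .tvar a => .tvar a
| .uvar y => if y = x then (match d with | .ty t => t | .eff _ => .uvar y) else .uvar y
| .int => .int
| .arrow t₁ e t₂ => .arrow (t₁.substU x d) (e.substU x d) (t₂.substU x d)
| .all a k t => .all a k (t.substU x d)

/-- Substitutions mapping unification variables to descriptors. -/
abbrev Subst := ℕ → Option Desc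

def idSubst : Subst := fun _ => none

def Subst.single (x : ℕ) (d : Desc) : Subst := fun y => if y = x then some d else none

def Eff.applyS (θ : Subst) : Eff → Eff
| .tvar a => .tvar a
| .uvar x => match θ x with | some (.eff e) => e | _ => .uvar x
| .pure => .pure
| .join e₁ e₂ => .join (e₁.applyS θ) (e₂.applyS θ)

def Ty.applyS (θ : Subst) : Ty → Ty
| .tvar a => .tvar a
| .uvar x => match θ x with | some (.ty t) => t | _ => .uvar x
| .int => .int
| .arrow t₁ e t₂ => .arrow (t₁.applyS θ) (e.applyS θ) (t₂.applyS θ)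
| .all a k t => .all a k (t.applyS θ)

def Desc.applyS (θ : Subst) : Desc → Desc
| .ty t => .ty (t.applyS θ)
| .eff e => .eff (e.applyS θ)

def Subst.comp (θ₂ θ₁ : Subst) : Subst :=
  fun x => match θ₁ x with
  | some d => some (d.applyS θ₂)
  | none => θ₂ x

def Env.applyS (θ : Subst) : Env → Env :=
  List.map (fun en => match en with
    | Entry.kind a k => Entry.kind a k
    | Entry.var x t => Entry.var x (t.applyS θ))

/-- Effect equivalence: least congruence containing the laws of an idempotent
commutative monoid with identity ∅ and operation ∪. -/
inductive EffEquiv : Eff → Eff → Prop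
| refl (e) : EffEquiv e e
| symm {e₁ e₂} : EffEquiv e₁ e₂ → EffEquiv e₂ e₁
| trans {e₁ e₂ e₃} : EffEquiv e₁ e₂ → EffEquiv e₂ e₃ → EffEquiv e₁ e₃
| congr {e₁ e₁' e₂ e₂'} : EffEquiv e₁ e₁' → EffEquiv e₂ e₂' →
    EffEquiv (.join e₁ e₂) (.join e₁' e₂')
| assoc (e₁ e₂ e₃) : EffEquiv (.join (.join e₁ e₂) e₃) (.join e₁ (.join e₂ e₃))
| comm (e₁ e₂) : EffEquiv (.join e₁ e₂) (.join e₂ e₁)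
| idem (e) : EffEquiv (.join e e) e
| pureId (e) : EffEquiv (.join .pure e) e

/-- Type equivalence (α-equivalence): least congruence respecting effect
equivalence in arrows and allowing renaming of ∀-bound variables. -/
inductive TyEquiv : Ty → Ty → Prop
| refl (t) : TyEquiv t t
| symm {t₁ t₂} : TyEquiv t₁ t₂ → TyEquiv t₂ t₁
| trans {t₁ t₂ t₃} : TyEquiv t₁ t₂ → TyEquiv t₂ t₃ → TyEquiv t₁ t₃
| arrow {t₁ t₁' t₂ t₂' e e'} : TyEquiv t₁ t₁' → EffEquiv e e' → TyEquiv t₂ t₂' →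
    TyEquiv (.arrow t₁ e t₂) (.arrow t₁' e' t₂')
| all {t t'} (a : ℕ) (k : Kind) : TyEquiv t t' → TyEquiv (.all a k t) (.all a k t')
| alpha {t : Ty} (a b : ℕ) (k : Kind) : b ∉ t.fv → b ∉ t.bv →
    TyEquiv (.all a k t) (.all b k (t.ren a b))

/-- Monomorphic types. -/
inductive Mono : Ty → Prop
| tvar (a : ℕ) : Mono (.tvar a)
| uvar (x : ℕ) : Mono (.uvar x)
| int : Mono .int
| arrow {t₁ t₂ : Ty} (e : Eff) : Mono t₁ → Mono t₂ → Mono (.arrow t₁ e t₂)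

/-- Kinding judgment Γ ⊢ δ : κ. -/
inductive Kinding : Env → Desc → Kind → Prop
| varTy {Γ a} : lookupKind Γ a = some .type → Kinding Γ (.ty (.tvar a)) .type
| varEff {Γ a} : lookupKind Γ a = some .effect → Kinding Γ (.eff (.tvar a)) .effect
| int {Γ} : Kinding Γ (.ty .int) .type
| arrow {Γ t₁ t₂ e} : Kinding Γ (.ty t₁) .type → Kinding Γ (.ty t₂) .type →
    Kinding Γ (.eff e) .effect → Kinding Γ (.ty (.arrow t₁ e t₂)) .type
| all {Γ a k t} : Kinding (Entry.kind a k :: Γ) (.ty t) .type →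
    Kinding Γ (.ty (.all a k t)) .type
| pure {Γ} : Kinding Γ (.eff .pure) .effect
| join {Γ e₁ e₂} : Kinding Γ (.eff e₁) .effect → Kinding Γ (.eff e₂) .effect →
    Kinding Γ (.eff (.join e₁ e₂)) .effect

def Desc.tyOr (d : Desc) (t : Ty) : Ty :=
  match d with
  | .ty t' => t'
  | .eff _ => t

/-- Capture-avoiding substitution of a descriptor for a type variable, as a
relation: {a ↦ d} τ = τ', with binders renamed as needed to avoid capture. -/
inductive SubstCA (a : ℕ) (d : Desc) : Ty → Ty → Prop
| tvar_eq : SubstCA a d (.tvar a) (d.tyOr (.tvar a))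
| tvar_ne {b} : b ≠ a → SubstCA a d (.tvar b) (.tvar b)
| uvar (x) : SubstCA a d (.uvar x) (.uvar x)
| int : SubstCA a d .int .int
| arrow {t₁ t₁' t₂ t₂' e} : SubstCA a d t₁ t₁' → SubstCA a d t₂ t₂' →
    SubstCA a d (.arrow t₁ e t₂) (.arrow t₁' (e.substC a d) t₂')
| all_eq {k t} : SubstCA a d (.all a k t) (.all a k t)
| all_ne {b k t t'} : b ≠ a → b ∉ d.fv → SubstCA a d t t' →
    SubstCA a d (.all b k t) (.all b k t')
| all_ren {b c k t t'} : b ≠ a → c ≠ a → c ∉ d.fv → c ∉ t.fv → c ∉ t.bv →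
    SubstCA a d (t.ren b c) t' → SubstCA a d (.all b k t) (.all c k t')

/-- The declarative type system (with the restored well-formedness premises),
including the rules for unannotated lambdas, integer literals and let-bindings. -/
inductive Typing : Env → Expr → Ty → Eff → Prop
| var {Γ x τ} : lookupVar Γ x = some τ → Typing Γ (.var x) τ .pure
| lit {Γ n} : Typing Γ (.lit n) .int .pure
| lam {Γ x τ₁ τ₂ e ε} : Kinding Γ (.ty τ₁) .type →
    Typing (Entry.var x τ₁ :: Γ) e τ₂ ε →
    Typing Γ (.lam x τ₁ e) (.arrow τ₁ ε τ₂) .pure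
| lamU {Γ x τ₁ τ₂ e ε} : Kinding Γ (.ty τ₁) .type → Mono τ₁ →
    Typing (Entry.var x τ₁ :: Γ) e τ₂ ε →
    Typing Γ (.lamU x e) (.arrow τ₁ ε τ₂) .pure
| app {Γ e₁ e₂ τ₁ τ₂ ε ε₁ ε₂} : Typing Γ e₁ (.arrow τ₂ ε τ₁) ε₁ →
    Typing Γ e₂ τ₂ ε₂ →
    Typing Γ (.app e₁ e₂) τ₁ (.join ε₁ (.join ε₂ ε))
| lamD {Γ a k e τ} : Typing (Entry.kind a k :: Γ) e τ .pure →
    Typing Γ (.lamD a k e) (.all a k τ) .pure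
| appD {Γ e a k τ τ' δ ε} : Typing Γ e (.all a k τ) ε → Kinding Γ δ k →
    SubstCA a δ τ τ' → Typing Γ (.appD e δ) τ' ε
| elet {Γ x e₁ e₂ τ₁ τ₂ ε₁ ε₂} : Typing Γ e₁ τ₁ ε₁ →
    Typing (Entry.var x τ₁ :: Γ) e₂ τ₂ ε₂ →
    Typing Γ (.elet x e₁ e₂) τ₂ (.join ε₁ ε₂)
| conv {Γ e τ₁ τ₂ ε₁ ε₂} : Typing Γ e τ₁ ε₁ → TyEquiv τ₁ τ₂ → EffEquiv ε₁ ε₂ →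
    Typing Γ e τ₂ ε₂

/-- The simplified declarative type system: the system of the figure without
the rule T-LamU (and without let-bindings). -/
inductive TypingND : Env → Expr → Ty → Eff → Prop
| var {Γ x τ} : lookupVar Γ x = some τ → TypingND Γ (.var x) τ .pure
| lit {Γ n} : TypingND Γ (.lit n) .int .pure
| lam {Γ x τ₁ τ₂ e ε} : Kinding Γ (.ty τ₁) .type →
    TypingND (Entry.var x τ₁ :: Γ) e τ₂ ε →
    TypingND Γ (.lam x τ₁ e) (.arrow τ₁ ε τ₂) .pure
| app {Γ e₁ e₂ τ₁ τ₂ ε ε₁ ε₂} : TypingND Γ e₁ (.arrow τ₂ ε τ₁) ε₁ →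
    TypingND Γ e₂ τ₂ ε₂ →
    TypingND Γ (.app e₁ e₂) τ₁ (.join ε₁ (.join ε₂ ε))
| lamD {Γ a k e τ} : TypingND (Entry.kind a k :: Γ) e τ .pure →
    TypingND Γ (.lamD a k e) (.all a k τ) .pure
| appD {Γ e a k τ τ' δ ε} : TypingND Γ e (.all a k τ) ε → Kinding Γ δ k →
    SubstCA a δ τ τ' → TypingND Γ (.appD e δ) τ' ε
| conv {Γ e τ₁ τ₂ ε₁ ε₂} : TypingND Γ e τ₁ ε₁ → TyEquiv τ₁ τ₂ → EffEquiv ε₁ ε₂ →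
    TypingND Γ e τ₂ ε₂

/-- τ has locally unique bound variables w.r.t. a domain of variables:
no binder in τ shadows another binder of τ, and no binder is in the domain. -/
def luTy (dom : Finset ℕ) : Ty → Prop
| .tvar _ => True
| .uvar _ => True
| .int => True
| .arrow t₁ _ t₂ => luTy dom t₁ ∧ luTy dom t₂
| .all a _ t => a ∉ dom ∧ luTy (insert a dom) t

def luDesc (dom : Finset ℕ) : Desc → Prop
| .ty t => luTy dom t
| .eff _ => True

/-- An environment has locally unique bound variables w.r.t. itself. -/
def luEnv (Γ : Env) : Prop := ∀ x τ, Entry.var x τ ∈ Γ → luTy Γ.kdom τ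

/-- e has globally unique bound variables w.r.t. a domain: every binder occurs
at most once in e and no binder is in the domain. -/
def guExpr (dom : Finset ℕ) (e : Expr) : Prop :=
  e.bv.Nodup ∧ ∀ a ∈ e.bv, a ∉ dom

/-- The simple type inference algorithm (for the calculus without unannotated
lambdas), using capturing substitution in the type application case. -/
inductive SInfer : Env → Expr → Ty → Eff → Prop
| var {Γ x τ} : lookupVar Γ x = some τ → SInfer Γ (.var x) τ .pure
| lit {Γ n} : SInfer Γ (.lit n) .int .pure
| lam {Γ x τ τ' e ε} : Kinding Γ (.ty τ) .type →
    SInfer (Entry.var x τ :: Γ) e τ' ε →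
    SInfer Γ (.lam x τ e) (.arrow τ ε τ') .pure
| app {Γ e₁ e₂ τa τ₁ τ₂ ε ε₁ ε₂} : SInfer Γ e₁ (.arrow τa ε τ₁) ε₁ →
    SInfer Γ e₂ τ₂ ε₂ → TyEquiv τa τ₂ →
    SInfer Γ (.app e₁ e₂) τ₁ (.join ε₁ (.join ε₂ ε))
| lamD {Γ a k e τ ε} : SInfer (Entry.kind a k :: Γ) e τ ε → EffEquiv ε .pure →
    SInfer Γ (.lamD a k e) (.all a k τ) .pure
| appD {Γ e a k τ δ ε} : SInfer Γ e (.all a k τ) ε → Kinding Γ δ k →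
    SInfer Γ (.appD e δ) (τ.substC a δ) ε

/-- The algebraic unification algorithm, as a relation. In the ∀-case a fresh
variable is chosen and both bound variables are renamed to it (capturing
renaming). Effect unification is delayed into constraints. -/
inductive Unify : Ty → Ty → Subst → List (Eff × Eff) → Prop
| tvar (a) : Unify (.tvar a) (.tvar a) idSubst []
| int : Unify .int .int idSubst []
| uvarRefl (x) : Unify (.uvar x) (.uvar x) idSubst []
| uvarL {x τ} : x ∉ τ.fuv → Mono τ → Unify (.uvar x) τ (Subst.single x (.ty τ)) []
| uvarR {x τ} : x ∉ τ.fuv → Mono τ → Unify τ (.uvar x) (Subst.single x (.ty τ)) []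
| arrow {t₁ t₂ t₁' t₂' e₁ e₂ θ₁ θ₂ C₁ C₂} :
    Unify t₁ t₂ θ₁ C₁ →
    Unify (t₁'.applyS θ₁) (t₂'.applyS θ₁) θ₂ C₂ →
    Unify (.arrow t₁ e₁ t₁') (.arrow t₂ e₂ t₂') (θ₂.comp θ₁)
      (C₁ ++ C₂ ++ [(e₁, e₂)])
| all {a₁ a₂ b k t₁ t₂ θ C} :
    b ∉ t₁.fv ∪ t₂.fv → b ∉ t₁.bv → b ∉ t₂.bv →
    Unify (t₁.ren a₁ b) (t₂.ren a₂ b) θ C →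
    Unify (.all a₁ k t₁) (.all a₂ k t₂) θ C

/-- Models: partial maps from effect unification variables to effects. -/
abbrev EModel := ℕ → Option Eff

/-- The identity substitution, as a model. -/
def idModel : EModel := fun _ => none

def Eff.applyM (μ : EModel) : Eff → Eff
| .tvar a => .tvar a
| .uvar x => (μ x).getD (.uvar x)
| .pure => .pure
| .join e₁ e₂ => .join (e₁.applyM μ) (e₂.applyM μ)

def Ty.applyM (μ : EModel) : Ty → Ty
| .tvar a => .tvar a
| .uvar x => .uvar x
| .int => .int
| .arrow t₁ e t₂ => .arrow (t₁.applyM μ) (e.applyM μ) (t₂.applyM μ)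
| .all a k t => .all a k (t.applyM μ)

/-- A model maps (effect) unification variables to ground effects. -/
def IsModel (μ : EModel) : Prop := ∀ x e, μ x = some e → Eff.fuv e = ∅

/-- μ ⊨ C : the model equates both sides of every constraint up to
effect equivalence. -/
def Models (μ : EModel) (C : List (Eff × Eff)) : Prop :=
  ∀ p ∈ C, EffEquiv (Eff.applyM μ p.1) (Eff.applyM μ p.2)

/-- Atomic identifiers (type variables and unification variables) of an effect. -/
def Eff.ids : Eff → Finset (ℕ ⊕ ℕ)
| .tvar a => {Sum.inl a}
| .uvar x => {Sum.inr x}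
| .pure => ∅
| .join e₁ e₂ => e₁.ids ∪ e₂.ids

/-- Free identifiers (type variables and unification variables) of a type. -/
def Ty.ids : Ty → Finset (ℕ ⊕ ℕ)
| .tvar a => {Sum.inl a}
| .uvar x => {Sum.inr x}
| .int => ∅
| .arrow t₁ e t₂ => t₁.ids ∪ e.ids ∪ t₂.ids
| .all a _ t => t.ids \ {Sum.inl a}

def constrIds (C : List (Eff × Eff)) : Finset (ℕ ⊕ ℕ) :=
  C.foldr (fun p s => p.1.ids ∪ p.2.ids ∪ s) ∅

/-- Free identifiers of an environment (domain of kind assignments and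
identifiers of assigned types). -/
def Env.ids : Env → Finset (ℕ ⊕ ℕ)
| [] => ∅
| Entry.kind a _ :: Γ => insert (Sum.inl a) (Env.ids Γ)
| Entry.var _ t :: Γ => t.ids ∪ Env.ids Γ

/-- Map identifiers of an effect through a function. -/
def Eff.mapIds (g : ℕ ⊕ ℕ → Eff) : Eff → Eff
| .tvar a => g (Sum.inl a)
| .uvar x => g (Sum.inr x)
| .pure => .pure
| .join e₁ e₂ => .join (e₁.mapIds g) (e₂.mapIds g)

/-- The Jouvelot–Gifford type-and-effect reconstruction algorithm, as a
relation R(Γ, e) = (τ, ε, θ, C); freshness of generated variables is expressed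
relative to the data available at the corresponding point. -/
inductive RInfer : Env → Expr → Ty → Eff → Subst → List (Eff × Eff) → Prop
| var {Γ x τ} : lookupVar Γ x = some τ → RInfer Γ (.var x) τ .pure idSubst []
| lit {Γ n} : RInfer Γ (.lit n) .int .pure idSubst []
| lam {Γ x τ τ' e ε θ C} : Kinding Γ (.ty τ) .type →
    RInfer (Entry.var x τ :: Γ) e τ' ε θ C →
    RInfer Γ (.lam x τ e) (.arrow τ ε τ') .pure θ C
| lamU {Γ x z e τ ε θ C} :
    Sum.inr z ∉ Env.ids Γ →
    RInfer (Entry.var x (.uvar z) :: Γ) e τ ε θ C →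
    RInfer Γ (.lamU x e) (.arrow (Ty.applyS θ (.uvar z)) ε τ) .pure θ C
| app {Γ e₁ e₂ τ₁ τ₂ ε₁ ε₂ θ₁ θ₂ θ₃ C₁ C₂ C₃ xt xe} :
    RInfer Γ e₁ τ₁ ε₁ θ₁ C₁ →
    RInfer (Env.applyS θ₁ Γ) e₂ τ₂ ε₂ θ₂ C₂ →
    xt ≠ xe →
    Sum.inr xt ∉ Env.ids Γ ∪ τ₁.ids ∪ τ₂.ids ∪ ε₁.ids ∪ ε₂.ids ∪ constrIds C₁ ∪ constrIds C₂ →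
    Sum.inr xe ∉ Env.ids Γ ∪ τ₁.ids ∪ τ₂.ids ∪ ε₁.ids ∪ ε₂.ids ∪ constrIds C₁ ∪ constrIds C₂ →
    Unify (τ₁.applyS θ₂) (.arrow τ₂ (.uvar xe) (.uvar xt)) θ₃ C₃ →
    RInfer Γ (.app e₁ e₂) (Ty.applyS θ₃ (.uvar xt))
      (.join ε₁ (.join ε₂ (.uvar xe))) ((θ₃.comp θ₂).comp θ₁) (C₁ ++ C₂ ++ C₃)
| lamD {Γ a k e τ ε θ C C' b} {f : ℕ ⊕ ℕ → ℕ} {g : ℕ ⊕ ℕ → Eff} :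
    RInfer (Entry.kind a k :: Γ) e τ ε θ C →
    C' = (ε, Eff.pure) :: C →
    Sum.inl b ∉ constrIds C' ∪ Env.ids (Env.applyS θ (Entry.kind a k :: Γ)) ∪ τ.ids →
    (∀ i ∈ constrIds C' \ Env.ids (Env.applyS θ (Entry.kind a k :: Γ)),
      Sum.inr (f i) ∉ constrIds C' ∪ Env.ids (Env.applyS θ (Entry.kind a k :: Γ)) ∪ τ.ids) →
    Set.InjOn f ↑(constrIds C' \ Env.ids (Env.applyS θ (Entry.kind a k :: Γ))) →
    g = (fun i => if i = Sum.inl a then Eff.tvar b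
      else if i ∈ constrIds C' \ Env.ids (Env.applyS θ (Entry.kind a k :: Γ))
        then Eff.uvar (f i)
        else match i with | Sum.inl t => Eff.tvar t | Sum.inr u => Eff.uvar u) →
    RInfer Γ (.lamD a k e) (.all a k τ) .pure θ
      ((C'.map (fun p => (Eff.mapIds g p.1, Eff.mapIds g p.2))) ++ C')
| appD {Γ e a k τ ε θ C δ} :
    RInfer Γ e (.all a k τ) ε θ C →
    Kinding Γ δ k →
    RInfer Γ (.appD e δ) (τ.substC a δ) ε θ
      (C.map (fun p => (p.1.substC a δ, p.2.substC a δ)))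

/-- ∀-free types. -/
def noForall : Ty → Prop
| .all _ _ _ => False
| .arrow t₁ _ t₂ => noForall t₁ ∧ noForall t₂
| _ => True

namespace SubstProof

lemma notmem₃ {x : ℕ} {A B C : Finset ℕ} (h : x ∉ A ∪ B ∪ C) :
    x ∉ A ∧ x ∉ B ∧ x ∉ C := by
  simp only [Finset.mem_union, not_or] at h
  exact ⟨h.1.1, h.1.2, h.2⟩

lemma mem₃ {x : ℕ} {A B C : Finset ℕ} (h1 : x ∉ A) (h2 : x ∉ B) (h3 : x ∉ C) :
    x ∉ A ∪ B ∪ C := by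
  simp only [Finset.mem_union, not_or]
  exact ⟨⟨h1, h2⟩, h3⟩

lemma notmem_erase {x d : ℕ} {s : Finset ℕ} (h : x ∉ s.erase d) (hxd : x ≠ d) :
    x ∉ s := fun hx => h (Finset.mem_erase.2 ⟨hxd, hx⟩)

/-- Effect renaming of a non-occurring variable is the identity. -/
lemma eff_ren_id {b c : ℕ} : ∀ {e : Eff}, b ∉ e.fv → e.ren b c = e
  | .tvar a, h => by
      have : a ≠ b := fun hab => h (by simp [Eff.fv, hab])
      simp [Eff.ren, Eff.substC, this]
  | .uvar _, _ => rfl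
  | .pure, _ => rfl
  | .join e₁ e₂, h => by
      simp only [Eff.fv, Finset.mem_union, not_or] at h
      show Eff.join (e₁.ren b c) (e₂.ren b c) = _
      rw [eff_ren_id h.1, eff_ren_id h.2]

/-- Type renaming of a non-occurring variable is the identity. -/
lemma ty_ren_id {b c : ℕ} : ∀ {t : Ty}, b ∉ t.fv → t.ren b c = t
  | .tvar a, h => by
      have : a ≠ b := fun hab => h (by simp [Ty.fv, hab])
      simp [Ty.ren, this]
  | .uvar _, _ => rfl
  | .int, _ => rfl
  | .arrow t₁ e t₂, h => by
      obtain ⟨h1, h2, h3⟩ := notmem₃ (by simpa only [Ty.fv] using h)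
      simp [Ty.ren, ty_ren_id h1, ty_ren_id h3, eff_ren_id h2]
  | .all d k t, h => by
      by_cases hd : d = b
      · simp [Ty.ren, hd]
      · have hb : b ∉ t.fv :=
          notmem_erase (by simpa only [Ty.fv] using h) (Ne.symm hd)
        simp [Ty.ren, hd, ty_ren_id hb]

lemma eff_ren_self {b : ℕ} : ∀ (e : Eff), e.ren b b = e
  | .tvar a => by by_cases h : a = b <;> simp [Eff.ren, Eff.substC, h]
  | .uvar _ => rfl
  | .pure => rfl
  | .join e₁ e₂ => by
      show Eff.join (e₁.ren b b) (e₂.ren b b) = _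
      rw [eff_ren_self e₁, eff_ren_self e₂]

lemma ty_ren_self {b : ℕ} : ∀ (t : Ty), t.ren b b = t
  | .tvar a => by by_cases h : a = b <;> simp [Ty.ren, h]
  | .uvar _ => rfl
  | .int => rfl
  | .arrow t₁ e t₂ => by
      simp [Ty.ren, ty_ren_self t₁, ty_ren_self t₂, eff_ren_self e]
  | .all d k t => by
      by_cases h : d = b <;> simp [Ty.ren, h, ty_ren_self t]

/-- Renaming does not change binder structure. -/
lemma bv_ren {b c : ℕ} : ∀ (t : Ty), (t.ren b c).bv = t.bv
  | .tvar a => by simp only [Ty.ren]; split <;> rfl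
  | .uvar _ => rfl
  | .int => rfl
  | .arrow t₁ e t₂ => by simp [Ty.ren, Ty.bv, bv_ren t₁, bv_ren t₂]
  | .all d k t => by
      by_cases h : d = b <;> simp [Ty.ren, h, Ty.bv, bv_ren t]

set_option linter.unusedVariables false

lemma eff_fv_ren {x b c : ℕ} : ∀ {e : Eff}, x ∉ e.fv → x ≠ c → x ∉ (e.ren b c).fv
  | .tvar a, h, hc => by
      by_cases ha : a = b <;> simp_all [Eff.ren, Eff.substC, Eff.fv]
  | .uvar _, h, _ => h
  | .pure, h, _ => h
  | .join e₁ e₂, h, hc => by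
      simp only [Eff.fv, Finset.mem_union, not_or] at h
      show x ∉ (Eff.join (e₁.ren b c) (e₂.ren b c)).fv
      simp only [Eff.fv, Finset.mem_union, not_or]
      exact ⟨eff_fv_ren h.1 hc, eff_fv_ren h.2 hc⟩

lemma ty_fv_ren {x b c : ℕ} : ∀ {t : Ty}, x ∉ t.fv → x ≠ c → x ∉ (t.ren b c).fv
  | .tvar a, h, hc => by
      by_cases ha : a = b <;> simp_all [Ty.ren, Ty.fv]
  | .uvar _, h, _ => h
  | .int, h, _ => h
  | .arrow t₁ e t₂, h, hc => by
      obtain ⟨h1, h2, h3⟩ := notmem₃ (by simpa only [Ty.fv] using h)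
      simp only [Ty.ren, Ty.fv]
      exact mem₃ (ty_fv_ren h1 hc) (eff_fv_ren h2 hc) (ty_fv_ren h3 hc)
  | .all d k t, h, hc => by
      simp only [Ty.fv] at h
      by_cases hd : d = b
      · simpa only [Ty.ren, hd, Ty.fv, if_true] using h
      · simp only [Ty.ren, hd, if_neg hd, Ty.fv]
        intro hx
        rcases Finset.mem_erase.1 hx with ⟨hxd, hxt⟩
        by_cases hxorig : x ∈ t.fv
        · exact h (Finset.mem_erase.2 ⟨hxd, hxorig⟩)
        · exact ty_fv_ren hxorig hc hxt

/-- Free variables of a capturing substitution in effects. -/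
lemma eff_fv_substC {x a : ℕ} {d : Desc} :
    ∀ {e : Eff}, x ∉ e.fv → x ∉ d.fv → x ∉ (e.substC a d).fv
  | .tvar b, h, hd => by
      by_cases hb : b = a
      · cases d with
        | ty t => simpa [Eff.substC, hb, Eff.fv] using h
        | eff e0 => simpa [Eff.substC, hb, Desc.fv] using hd
      · simpa [Eff.substC, hb, Eff.fv] using h
  | .uvar _, h, _ => h
  | .pure, h, _ => h
  | .join e₁ e₂, h, hd => by
      simp only [Eff.fv, Finset.mem_union, not_or] at h
      simp only [Eff.substC, Eff.fv, Finset.mem_union, not_or]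
      exact ⟨eff_fv_substC h.1 hd, eff_fv_substC h.2 hd⟩

/-- Free variables of a capturing substitution in types. -/
lemma ty_fv_substC {x a : ℕ} {d : Desc} :
    ∀ {t : Ty}, x ∉ t.fv → x ∉ d.fv → x ∉ (t.substC a d).fv
  | .tvar b, h, hd => by
      by_cases hb : b = a
      · cases d with
        | ty t0 => simpa [Ty.substC, hb, Desc.fv] using hd
        | eff e0 => simpa [Ty.substC, hb, Ty.fv] using h
      · simpa [Ty.substC, hb, Ty.fv] using h
  | .uvar _, h, _ => h
  | .int, h, _ => h
  | .arrow t₁ e t₂, h, hd => by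
      obtain ⟨h1, h2, h3⟩ := notmem₃ (by simpa only [Ty.fv] using h)
      simp only [Ty.substC, Ty.fv]
      exact mem₃ (ty_fv_substC h1 hd) (eff_fv_substC h2 hd) (ty_fv_substC h3 hd)
  | .all b k t, h, hd => by
      simp only [Ty.fv] at h
      by_cases hb : b = a
      · simpa only [Ty.substC, hb, if_pos rfl, Ty.fv, if_true] using h
      · simp only [Ty.substC, if_neg hb, Ty.fv]
        intro hx
        rcases Finset.mem_erase.1 hx with ⟨hxb, hxt⟩
        by_cases hxorig : x ∈ t.fv
        · exact h (Finset.mem_erase.2 ⟨hxb, hxorig⟩)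
        · exact ty_fv_substC hxorig hd hxt

/-- Capturing substitution commutes with renaming of fresh variables: effects. -/
lemma eff_substC_ren {a b c : ℕ} {d : Desc} (hba : b ≠ a) (hca : c ≠ a)
    (hbd : b ∉ d.fv) : ∀ (e : Eff), (e.ren b c).substC a d = (e.substC a d).ren b c
  | .tvar x => by
      by_cases hx : x = b
      · subst hx
        simp [Eff.ren, Eff.substC, hba, hca]
      · by_cases hxa : x = a
        · subst hxa
          have hbt : b ∉ (Eff.tvar x).fv := by
            simp only [Eff.fv, Finset.mem_singleton]
            exact fun h => hba h
          rw [eff_ren_id hbt]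
          exact (eff_ren_id (eff_fv_substC hbt hbd)).symm
        · simp [Eff.ren, Eff.substC, hx, hxa]
  | .uvar _ => rfl
  | .pure => rfl
  | .join e₁ e₂ => by
      show Eff.substC a d (Eff.join (e₁.ren b c) (e₂.ren b c)) = _
      show Eff.join ((e₁.ren b c).substC a d) ((e₂.ren b c).substC a d) = _
      rw [eff_substC_ren hba hca hbd e₁, eff_substC_ren hba hca hbd e₂]
      rfl

/-- Capturing substitution commutes with renaming of fresh variables: types. -/
lemma ty_substC_ren {a b c : ℕ} {d : Desc} (hba : b ≠ a) (hca : c ≠ a)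
    (hbd : b ∉ d.fv) : ∀ (t : Ty), (t.ren b c).substC a d = (t.substC a d).ren b c
  | .tvar x => by
      by_cases hx : x = b
      · subst hx
        simp [Ty.ren, Ty.substC, hba, hca]
      · by_cases hxa : x = a
        · subst hxa
          have hbt : b ∉ (Ty.tvar x).fv := by
            simp only [Ty.fv, Finset.mem_singleton]
            exact fun h => hba h
          rw [ty_ren_id hbt]
          exact (ty_ren_id (ty_fv_substC hbt hbd)).symm
        · simp [Ty.ren, Ty.substC, hx, hxa]
  | .uvar _ => rfl
  | .int => rfl
  | .arrow t₁ e t₂ => by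
      have he := eff_substC_ren (d := d) hba hca hbd e
      simp only [Ty.ren, Ty.substC]
      rw [ty_substC_ren hba hca hbd t₁, ty_substC_ren hba hca hbd t₂, he]
  | .all x k t => by
      by_cases hx : x = b
      · subst hx
        have hxa' : x ≠ a := hba
        simp [Ty.ren, Ty.substC, hba]
      · by_cases hxa : x = a
        · subst hxa
          simp [Ty.ren, Ty.substC, hx]
        · simp [Ty.ren, Ty.substC, hx, hxa, ty_substC_ren hba hca hbd t]

/-- `goodRen b c t`: no free occurrence of `b` in `t` lies under a binder
named `c` (so renaming `b` to `c` is capture-free). -/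
def goodRen (b c : ℕ) : Ty → Prop
  | .tvar _ => True
  | .uvar _ => True
  | .int => True
  | .arrow t₁ _ t₂ => goodRen b c t₁ ∧ goodRen b c t₂
  | .all d _ t => if d = b then True else if d = c then b ∉ t.fv else goodRen b c t

lemma goodRen_of_not_fv {b c : ℕ} : ∀ {t : Ty}, b ∉ t.fv → goodRen b c t
  | .tvar _, _ => trivial
  | .uvar _, _ => trivial
  | .int, _ => trivial
  | .arrow t₁ e t₂, h => by
      obtain ⟨h1, _, h3⟩ := notmem₃ (by simpa only [Ty.fv] using h)
      exact ⟨goodRen_of_not_fv h1, goodRen_of_not_fv h3⟩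
  | .all d k t, h => by
      by_cases hd : d = b
      · simp [goodRen, hd]
      · have hb : b ∉ t.fv :=
          notmem_erase (by simpa only [Ty.fv] using h) (Ne.symm hd)
        by_cases hdc : d = c <;>
          simp [goodRen, hd, hdc, hb, goodRen_of_not_fv hb]

lemma goodRen_of_not_bv {b c : ℕ} : ∀ {t : Ty}, c ∉ t.bv → goodRen b c t
  | .tvar _, _ => trivial
  | .uvar _, _ => trivial
  | .int, _ => trivial
  | .arrow t₁ e t₂, h => by
      simp only [Ty.bv, List.mem_append, not_or] at h
      exact ⟨goodRen_of_not_bv h.1, goodRen_of_not_bv h.2⟩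
  | .all d k t, h => by
      simp only [Ty.bv, List.mem_cons, not_or] at h
      by_cases hd : d = b
      · simp [goodRen, hd]
      · simp [goodRen, hd, Ne.symm h.1, goodRen_of_not_bv h.2]

/-- After a capturing substitution with `b` not free in the descriptor and
`b, c` not binders of `t`, the renaming `b ↦ c` is capture-free. -/
lemma goodRen_substC {a b c : ℕ} {d : Desc} (hbd : b ∉ d.fv) :
    ∀ {t : Ty}, b ∉ t.bv → c ∉ t.bv → goodRen b c (t.substC a d)
  | .tvar x, _, _ => by
      by_cases hx : x = a
      · cases d with
        | ty t0 =>
            simpa [Ty.substC, hx] using goodRen_of_not_fv (c := c) (t := t0)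
              (by simpa [Desc.fv] using hbd)
        | eff e0 => simp [Ty.substC, hx, goodRen]
      · simp [Ty.substC, hx, goodRen]
  | .uvar _, _, _ => trivial
  | .int, _, _ => trivial
  | .arrow t₁ e t₂, hb, hc => by
      simp only [Ty.bv, List.mem_append, not_or] at hb hc
      exact ⟨goodRen_substC hbd hb.1 hc.1, goodRen_substC hbd hb.2 hc.2⟩
  | .all x k t, hb, hc => by
      by_cases hx : x = a
      · simp only [Ty.substC, if_pos hx]
        exact goodRen_of_not_bv hc
      · simp only [Ty.bv, List.mem_cons, not_or] at hb hc
        have hxb : ¬ x = b := fun h => hb.1 h.symm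
        have hxc : ¬ x = c := fun h => hc.1 h.symm
        simp only [Ty.substC, if_neg hx, goodRen, if_neg hxb, if_neg hxc]
        exact goodRen_substC hbd hb.2 hc.2

lemma eff_ren_ren {b c c₂ : ℕ} : ∀ {e : Eff}, c ∉ e.fv →
    (e.ren b c).ren c c₂ = e.ren b c₂
  | .tvar x, h => by
      have hxc : x ≠ c := fun hx => h (by simp [Eff.fv, hx])
      by_cases hx : x = b
      · simp [Eff.ren, Eff.substC, hx]
      · simp [Eff.ren, Eff.substC, hx, hxc]
  | .uvar _, _ => rfl
  | .pure, _ => rfl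
  | .join e₁ e₂, h => by
      simp only [Eff.fv, Finset.mem_union, not_or] at h
      show Eff.join ((e₁.ren b c).ren c c₂) ((e₂.ren b c).ren c c₂) = _
      rw [eff_ren_ren h.1, eff_ren_ren h.2]
      rfl

/-- Composition of capture-free renamings. -/
lemma ty_ren_ren {b c c₂ : ℕ} : ∀ {t : Ty}, c ∉ t.fv → goodRen b c t →
    (t.ren b c).ren c c₂ = t.ren b c₂
  | .tvar x, h, _ => by
      have hxc : x ≠ c := fun hx => h (by simp [Ty.fv, hx])
      by_cases hx : x = b
      · simp [Ty.ren, hx]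
      · simp [Ty.ren, hx, hxc]
  | .uvar _, _, _ => rfl
  | .int, _, _ => rfl
  | .arrow t₁ e t₂, h, hg => by
      obtain ⟨h1, h2, h3⟩ := notmem₃ (by simpa only [Ty.fv] using h)
      have he := eff_ren_ren (b := b) (c₂ := c₂) h2
      simp only [Ty.ren]
      rw [ty_ren_ren h1 hg.1, ty_ren_ren h3 hg.2, he]
  | .all d k t, h, hg => by
      simp only [Ty.fv] at h
      by_cases hd : d = b
      · subst hd
        by_cases hcd : c = d
        · subst hcd
          simp [Ty.ren]
        · have hct : c ∉ t.fv := notmem_erase h hcd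
          simp [Ty.ren, hcd, ty_ren_id hct]
      · by_cases hdc : d = c
        · subst hdc
          have hb : b ∉ t.fv := by simpa [goodRen, hd] using hg
          simp [Ty.ren, hd, ty_ren_id hb, ty_ren_id (c := c₂) hb]
        · have hct : c ∉ t.fv := notmem_erase h (Ne.symm hdc)
          have hg' : goodRen b c t := by simpa [goodRen, hd, hdc] using hg
          simp [Ty.ren, hd, hdc, ty_ren_ren hct hg']

/-- Alpha-renaming of a ∀, assuming the renaming is capture-free. -/
lemma tyEquiv_alpha' {b c : ℕ} {k : Kind} {u : Ty} (hc : c ∉ u.fv)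
    (hg : goodRen b c u) : TyEquiv (.all b k u) (.all c k (u.ren b c)) := by
  by_cases hbc : b = c
  · subst hbc
    rw [ty_ren_self]
    exact TyEquiv.refl _
  · obtain ⟨c₂, hc₂⟩ := Infinite.exists_notMem_finset
      (u.fv ∪ (u.ren b c).fv ∪ u.bv.toFinset)
    obtain ⟨h1, h2, h3⟩ := notmem₃ hc₂
    have h3' : c₂ ∉ u.bv := fun hx => h3 (List.mem_toFinset.2 hx)
    have e1 : TyEquiv (.all b k u) (.all c₂ k (u.ren b c₂)) :=
      TyEquiv.alpha b c₂ k h1 h3'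
    have e2 : TyEquiv (.all c k (u.ren b c)) (.all c₂ k ((u.ren b c).ren c c₂)) :=
      TyEquiv.alpha c c₂ k h2 (by rw [bv_ren]; exact h3')
    rw [ty_ren_ren hc hg] at e2
    exact e1.trans e2.symm

/-- `luTy` is antitone in the domain. -/
lemma luTy_subset : ∀ {t : Ty} {s s' : Finset ℕ}, s ⊆ s' → luTy s' t → luTy s t
  | .tvar _, _, _, _, _ => trivial
  | .uvar _, _, _, _, _ => trivial
  | .int, _, _, _, _ => trivial
  | .arrow t₁ e t₂, s, s', h, hl =>
      ⟨luTy_subset h hl.1, luTy_subset h hl.2⟩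
  | .all d k t, s, s', h, hl =>
      ⟨fun hd => hl.1 (h hd), luTy_subset (Finset.insert_subset_insert d h) hl.2⟩

lemma luTy_ren {b c : ℕ} : ∀ {t : Ty} {s : Finset ℕ}, luTy s t → luTy s (t.ren b c)
  | .tvar x, s, h => by by_cases hx : x = b <;> simp [Ty.ren, hx, luTy]
  | .uvar _, _, h => h
  | .int, _, h => h
  | .arrow t₁ e t₂, s, h => ⟨luTy_ren h.1, luTy_ren h.2⟩
  | .all d k t, s, h => by
      by_cases hd : d = b
      · simpa [Ty.ren, hd] using h
      · simp only [Ty.ren, if_neg hd, luTy]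
        exact ⟨h.1, luTy_ren h.2⟩

lemma luTy_bv : ∀ {t : Ty} {s : Finset ℕ} {x : ℕ}, luTy s t → x ∈ s → x ∉ t.bv
  | .tvar _, _, _, _, _ => by simp [Ty.bv]
  | .uvar _, _, _, _, _ => by simp [Ty.bv]
  | .int, _, _, _, _ => by simp [Ty.bv]
  | .arrow t₁ e t₂, s, x, h, hx => by
      simp only [Ty.bv, List.mem_append, not_or]
      exact ⟨luTy_bv h.1 hx, luTy_bv h.2 hx⟩
  | .all d k t, s, x, h, hx => by
      simp only [Ty.bv, List.mem_cons, not_or]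
      constructor
      · rintro rfl; exact h.1 hx
      · exact luTy_bv h.2 (Finset.mem_insert_of_mem hx)

lemma lookupKind_mem_kdom {x : ℕ} {k : Kind} : ∀ {Γ : Env},
    lookupKind Γ x = some k → x ∈ Γ.kdom := by
  intro Γ
  induction Γ with
  | nil => intro h; simp [lookupKind] at h
  | cons en Γ ih =>
      cases en with
      | kind b k' =>
          intro h
          by_cases hx : x = b
          · simp [Env.kdom, hx]
          · simp only [lookupKind, if_neg hx] at h
            simp [Env.kdom, hx, ih h]
      | var y t =>
          intro h
          exact ih (by simpa [lookupKind] using h)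

/-- Free variables of a well-kinded descriptor are in the kind domain. -/
lemma kinding_fv {Γ : Env} {d : Desc} {k : Kind} (h : Kinding Γ d k) :
    d.fv ⊆ Γ.kdom := by
  induction h with
  | varTy h => simpa [Desc.fv, Ty.fv] using lookupKind_mem_kdom h
  | varEff h => simpa [Desc.fv, Eff.fv] using lookupKind_mem_kdom h
  | int => simp [Desc.fv, Ty.fv]
  | arrow _ _ _ ih₁ ih₂ ih₃ =>
      simp only [Desc.fv, Ty.fv] at *
      exact Finset.union_subset (Finset.union_subset ih₁ ih₃) ih₂
  | all _ ih =>
      simp only [Desc.fv, Ty.fv, Env.kdom] at *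
      intro x hx
      rcases Finset.mem_erase.1 hx with ⟨hxa, hxt⟩
      have := ih hxt
      rcases Finset.mem_insert.1 this with h' | h'
      · exact absurd h' hxa
      · exact h'
  | pure => simp [Desc.fv, Eff.fv]
  | join _ _ ih₁ ih₂ =>
      simp only [Desc.fv, Eff.fv] at *
      exact Finset.union_subset ih₁ ih₂

lemma main_lemma {a : ℕ} {δ : Desc} : ∀ {τ τ' : Ty}, SubstCA a δ τ τ' →
    ∀ dom : Finset ℕ, a ∈ dom → δ.fv ⊆ dom → luTy dom τ →
    TyEquiv τ' (τ.substC a δ) := by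
  intro τ τ' h
  induction h with
  | tvar_eq =>
      intro dom _ _ _
      cases δ <;> simp [Ty.substC, Desc.tyOr] <;> exact TyEquiv.refl _
  | tvar_ne hb =>
      intro dom _ _ _
      simp only [Ty.substC, if_neg hb]
      exact TyEquiv.refl _
  | uvar x => intro dom _ _ _; exact TyEquiv.refl _
  | int => intro dom _ _ _; exact TyEquiv.refl _
  | arrow _ _ ih₁ ih₂ =>
      intro dom ha hd hl
      exact TyEquiv.arrow (ih₁ dom ha hd hl.1) (EffEquiv.refl _)
        (ih₂ dom ha hd hl.2)
  | all_eq =>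
      intro dom ha _ hl
      exact absurd ha hl.1
  | @all_ne b k t t' hba hbd _ ih =>
      intro dom ha hd hl
      simp only [Ty.substC, if_neg hba]
      exact TyEquiv.all b k (ih (insert b dom) (Finset.mem_insert_of_mem ha)
        (hd.trans (Finset.subset_insert b dom)) hl.2)
  | @all_ren b c k t t' hba hca hcd hct hctb _ ih =>
      intro dom ha hd hl
      have hbdom : b ∉ dom := hl.1
      have hbd : b ∉ δ.fv := fun h => hbdom (hd h)
      have hlt : luTy dom t := luTy_subset (Finset.subset_insert b dom) hl.2
      have ih' : TyEquiv t' ((t.ren b c).substC a δ) :=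
        ih dom ha hd (luTy_ren hlt)
      rw [ty_substC_ren hba hca hbd] at ih'
      have hbv : b ∉ t.bv := luTy_bv hl.2 (Finset.mem_insert_self b dom)
      have halpha : TyEquiv (.all b k (t.substC a δ))
          (.all c k ((t.substC a δ).ren b c)) :=
        tyEquiv_alpha' (ty_fv_substC hct hcd) (goodRen_substC hbd hbv hctb)
      simp only [Ty.substC, if_neg hba]
      exact (TyEquiv.all c k ih').trans halpha.symm

end SubstProof
/-- If τ has locally unique bound variables w.r.t. Γ, α:κ and
Γ ⊢ δ : κ, then the capture-avoiding substitution {α ↦ δ}τ is α-equivalent to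
the capturing substitution [α ↦ δ]τ. -/
theorem substCA_equiv_substC (Γ : Env) (a : ℕ) (κ : Kind) (δ : Desc) (τ τ' : Ty)
    (hlu : luTy (Env.kdom (Entry.kind a κ :: Γ)) τ)
    (hκ : Kinding Γ δ κ)
    (hca : SubstCA a δ τ τ') :
    TyEquiv τ' (Ty.substC a δ τ) := by
  refine SubstProof.main_lemma hca (Env.kdom (Entry.kind a κ :: Γ)) ?_ ?_ hlu
  · simp [Env.kdom]
  · exact (SubstProof.kinding_fv hκ).trans (by simp [Env.kdom, Finset.subset_insert])
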